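/- For the Curie-Weiss model, for every N ≥ 1 and every trial parameter M ∈ ℝ, N^{-1} log Z_N(β,h) ≥ log 2 + log cosh(β(h+M)) − (β/2) M². -/

import Mathlib

open Finset Real

/-- The value `±1` of an Ising spin encoded by a Boolean. -/
def spin (b : Bool) : ℝ := if b then 1 else -1

/-- Magnetization of a configuration of `N` Ising spins. -/
noncomputable def cwMag (N : ℕ) (σ : Fin N → Bool) : ℝ := (∑ i, spin (σ i)) / N

/-- Curie-Weiss partition function `Z_N(β,h) = ∑_σ exp((β/2) N m(σ)² + β h ∑ᵢ σᵢ)`. -/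
noncomputable def cwZ (N : ℕ) (β h : ℝ) : ℝ :=
  ∑ σ : Fin N → Bool,
    Real.exp (β / 2 * N * cwMag N σ ^ 2 + β * h * ∑ i, spin (σ i))

/-- uniform lower bound for the Curie-Weiss free energy:
for every `N ≥ 1` and every trial parameter `M`,
`N⁻¹ log Z_N(β,h) ≥ log 2 + log cosh(β(h+M)) − (β/2) M²`. -/
theorem cw_free_energy_lower_bound (β h : ℝ) (hβ : 0 ≤ β) (N : ℕ) (hN : 1 ≤ N) (M : ℝ) :
    Real.log 2 + Real.log (Real.cosh (β * (h + M))) - β / 2 * M ^ 2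
      ≤ Real.log (cwZ N β h) / N := by
  have hN' : (0:ℝ) < N := by exact_mod_cast hN
  set x := β * (h + M) with hx
  have hc : 0 < Real.cosh x := Real.cosh_pos x
  -- lower bound each Boltzmann weight
  have key : ∀ σ : Fin N → Bool,
      Real.exp (x * ∑ i, spin (σ i) - β / 2 * N * M ^ 2)
        ≤ Real.exp (β / 2 * N * cwMag N σ ^ 2 + β * h * ∑ i, spin (σ i)) := by
    intro σ
    apply Real.exp_le_exp.mpr
    have hm : cwMag N σ * N = ∑ i, spin (σ i) := by
      rw [cwMag, div_mul_cancel₀ _ (ne_of_gt hN')]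
    have sq : 2 * cwMag N σ * M - M ^ 2 ≤ cwMag N σ ^ 2 := by
      nlinarith [sq_nonneg (cwMag N σ - M)]
    have hcN : (0:ℝ) ≤ β / 2 * N := by positivity
    rw [hx, ← hm]
    nlinarith [mul_le_mul_of_nonneg_left sq hcN]
  -- sum factorizes
  have factor : ∑ σ : Fin N → Bool, Real.exp (x * ∑ i, spin (σ i))
      = (2 * Real.cosh x) ^ N := by
    have : ∀ σ : Fin N → Bool,
        Real.exp (x * ∑ i, spin (σ i)) = ∏ i, Real.exp (x * spin (σ i)) := by
      intro σ
      rw [← Real.exp_sum, Finset.mul_sum]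
    simp_rw [this]
    rw [← Fintype.sum_pow (fun b : Bool => Real.exp (x * spin b)) N]
    congr 1
    simp [spin, Real.cosh_eq, mul_comm]
    ring
  have hZ : Real.exp (-(β / 2 * N * M ^ 2)) * (2 * Real.cosh x) ^ N ≤ cwZ N β h := by
    rw [← factor, Finset.mul_sum]
    apply Finset.sum_le_sum
    intro σ _
    rw [← Real.exp_add]
    calc Real.exp (-(β / 2 * N * M ^ 2) + x * ∑ i, spin (σ i))
        = Real.exp (x * ∑ i, spin (σ i) - β / 2 * N * M ^ 2) := by ring_nf
      _ ≤ _ := key σ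
  have hpos : (0:ℝ) < Real.exp (-(β / 2 * N * M ^ 2)) * (2 * Real.cosh x) ^ N := by
    positivity
  have hlog := Real.log_le_log hpos hZ
  rw [Real.log_mul (ne_of_gt (Real.exp_pos _)) (by positivity), Real.log_exp,
    Real.log_pow, Real.log_mul two_ne_zero (ne_of_gt hc)] at hlog
  rw [le_div_iff₀ hN']
  nlinarith [hlog]
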